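/- Let A^(z) be a submatrix of A consisting of a subset of rows, and let C^(z) (resp. C̃^(z)) be the corresponding matrices of local cluster means (resp. global cluster means restricted to these rows). If at most k' local clusters are nonempty, then ‖C̃^(z) − C^(z)‖_op² ≤ ∑_{r=1}^{k} |T_r^(z)| · ‖μ(T_r^(z)) − μ(T_r)‖₂², and consequently ‖C̃^(z) − C^(z)‖_op ≤ √(k') · ‖A − C‖_op. -/

import Mathlib

/-- The ℓ2 (spectral) operator norm of a matrix. -/
noncomputable def opNorm {n d : ℕ} (M : Matrix (Fin n) (Fin d) ℝ) : ℝ :=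
  ‖LinearMap.toContinuousLinearMap (Matrix.toEuclideanLin M)‖

/-- Mean of the rows of `A` indexed by `S`, as a point of Euclidean space. -/
noncomputable def clMean {n d : ℕ} (A : Matrix (Fin n) (Fin d) ℝ) (S : Finset (Fin n)) :
    EuclideanSpace ℝ (Fin d) :=
  (S.card : ℝ)⁻¹ • ∑ i ∈ S, (WithLp.equiv 2 (Fin d → ℝ)).symm (A i)

/-- The cluster (as a `Finset`) of label `r` under the cluster assignment `c`. -/
def cluster {n k : ℕ} (c : Fin n → Fin k) (r : Fin k) : Finset (Fin n) :=
  Finset.univ.filter (fun j => c j = r)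

/-- Local cluster on a device whose rows are selected by the embedding `e`. -/
def localCluster {n m k : ℕ} (c : Fin n → Fin k) (e : Fin m ↪ Fin n) (r : Fin k) :
    Finset (Fin m) :=
  Finset.univ.filter (fun i => c (e i) = r)

open scoped Matrix.Norms.L2Operator

lemma opNorm_eq' {n d : ℕ} (M : Matrix (Fin n) (Fin d) ℝ) : opNorm M = ‖M‖ := rfl

lemma opNorm_nonneg' {n d : ℕ} (M : Matrix (Fin n) (Fin d) ℝ) : 0 ≤ opNorm M := norm_nonneg _

lemma opNorm_transpose' {n d : ℕ} (M : Matrix (Fin n) (Fin d) ℝ) :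
    opNorm M.transpose = opNorm M := by
  rw [opNorm_eq', opNorm_eq', ← Matrix.conjTranspose_eq_transpose_of_trivial,
    Matrix.l2_opNorm_conjTranspose]

lemma vecMul_norm_le' {n d : ℕ} (M : Matrix (Fin n) (Fin d) ℝ) (u : Fin n → ℝ) :
    ‖(WithLp.equiv 2 (Fin d → ℝ)).symm (Matrix.vecMul u M)‖
      ≤ opNorm M * ‖(WithLp.equiv 2 (Fin n → ℝ)).symm u‖ := by
  rw [← Matrix.mulVec_transpose, ← opNorm_transpose', opNorm_eq']
  exact Matrix.l2_opNorm_mulVec M.transpose ((WithLp.equiv 2 (Fin n → ℝ)).symm u)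

lemma opNorm_sq_le_sum_rows' {m d : ℕ} (M : Matrix (Fin m) (Fin d) ℝ) :
    opNorm M ^ 2 ≤ ∑ i, ‖(WithLp.equiv 2 (Fin d → ℝ)).symm (M i)‖ ^ 2 := by
  set S := ∑ i, ‖(WithLp.equiv 2 (Fin d → ℝ)).symm (M i)‖ ^ 2 with hS
  have hS0 : 0 ≤ S := Finset.sum_nonneg fun i _ => sq_nonneg _
  have key : opNorm M ≤ Real.sqrt S := by
    apply ContinuousLinearMap.opNorm_le_bound _ (Real.sqrt_nonneg S)
    intro x
    set L := LinearMap.toContinuousLinearMap (Matrix.toEuclideanLin M)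
    have hx : ∀ i : Fin m, (L x) i
        = inner ℝ ((WithLp.equiv 2 (Fin d → ℝ)).symm (M i)) x := by
      intro i
      simp [L, Matrix.toEuclideanLin_apply, Matrix.mulVec, dotProduct,
        PiLp.inner_apply, WithLp.equiv_symm_apply, PiLp.toLp_apply, RCLike.inner_apply, conj_trivial]
      exact Finset.sum_congr rfl fun _ _ => mul_comm _ _
    have h1 : ‖L x‖ ^ 2 ≤ S * ‖x‖ ^ 2 := by
      have hn : ‖L x‖ ^ 2 = ∑ i : Fin m, ‖(L x) i‖ ^ 2 := by
        rw [EuclideanSpace.norm_eq, Real.sq_sqrt (Finset.sum_nonneg fun i _ => sq_nonneg _)]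
      rw [hn, hS, Finset.sum_mul]
      apply Finset.sum_le_sum
      intro i _
      rw [hx i, Real.norm_eq_abs, sq_abs]
      calc (inner ℝ ((WithLp.equiv 2 (Fin d → ℝ)).symm (M i)) x : ℝ) ^ 2
          = |(inner ℝ ((WithLp.equiv 2 (Fin d → ℝ)).symm (M i)) x : ℝ)| ^ 2 := (sq_abs _).symm
        _ ≤ (‖(WithLp.equiv 2 (Fin d → ℝ)).symm (M i)‖ * ‖x‖) ^ 2 := by
            apply pow_le_pow_left₀ (abs_nonneg _) (abs_real_inner_le_norm _ _)
        _ = ‖(WithLp.equiv 2 (Fin d → ℝ)).symm (M i)‖ ^ 2 * ‖x‖ ^ 2 := by ring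
    calc ‖L x‖ = Real.sqrt (‖L x‖ ^ 2) := (Real.sqrt_sq (norm_nonneg _)).symm
      _ ≤ Real.sqrt (S * ‖x‖ ^ 2) := Real.sqrt_le_sqrt h1
      _ = Real.sqrt S * ‖x‖ := by
          rw [Real.sqrt_mul hS0, Real.sqrt_sq (norm_nonneg _)]
  calc opNorm M ^ 2 ≤ Real.sqrt S ^ 2 := pow_le_pow_left₀ (opNorm_nonneg' M) key 2
    _ = S := Real.sq_sqrt hS0

lemma meanshift' {n m d k : ℕ} (A C : Matrix (Fin n) (Fin d) ℝ) (c : Fin n → Fin k)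
    (e : Fin m ↪ Fin n)
    (hC : ∀ i, (WithLp.equiv 2 (Fin d → ℝ)).symm (C i) = clMean A (cluster c (c i)))
    (r : Fin k) (h : (localCluster c e r).Nonempty) :
    ((localCluster c e r).card : ℝ) *
        ‖clMean (A.submatrix ⇑e id) (localCluster c e r) - clMean A (cluster c r)‖ ^ 2
      ≤ opNorm (A - C) ^ 2 := by
  classical
  set S := localCluster c e r with hSdef
  set s : ℝ := (S.card : ℝ) with hs
  have hs0 : 0 < s := by rw [hs]; exact_mod_cast Finset.card_pos.mpr h
  set T := S.map e with hT
  have hTcard : (T.card : ℝ) = s := by simp [hT, hs]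
  set u : Fin n → ℝ := fun j => if j ∈ T then s⁻¹ else 0 with hu
  have hunorm : ‖(WithLp.equiv 2 (Fin n → ℝ)).symm u‖ = Real.sqrt s⁻¹ := by
    rw [EuclideanSpace.norm_eq]
    congr 1
    have h1 : ∀ j : Fin n, ‖u j‖ ^ 2 = if j ∈ T then s⁻¹ * s⁻¹ else 0 := by
      intro j
      by_cases hj : j ∈ T <;> simp [hu, hj, sq, Real.norm_eq_abs, abs_mul]
      · rw [abs_of_nonneg (by positivity)]
    simp only [WithLp.equiv_symm_apply, PiLp.toLp_apply]
    rw [Finset.sum_congr rfl fun j _ => h1 j, Finset.sum_ite_mem,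
      Finset.univ_inter, Finset.sum_const, nsmul_eq_mul, hTcard]
    field_simp
  have husum : ∀ v : Fin n → ℝ, ∑ i, u i * v i = s⁻¹ * ∑ i ∈ T, v i := by
    intro v
    calc ∑ i, u i * v i = ∑ i, if i ∈ T then s⁻¹ * v i else 0 := by
          refine Finset.sum_congr rfl fun i _ => ?_
          by_cases hi : i ∈ T <;> simp [hu, hi]
      _ = ∑ i ∈ T, s⁻¹ * v i := by rw [Finset.sum_ite_mem, Finset.univ_inter]
      _ = s⁻¹ * ∑ i ∈ T, v i := by rw [Finset.mul_sum]
  have key : (WithLp.equiv 2 (Fin d → ℝ)).symm (Matrix.vecMul u (A - C))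
      = clMean (A.submatrix ⇑e id) S - clMean A (cluster c r) := by
    ext j
    have lhs : Matrix.vecMul u (A - C) j = s⁻¹ * ∑ i ∈ T, (A i j - C i j) := by
      rw [Matrix.vecMul, dotProduct]
      simpa using husum (fun i => A i j - C i j)
    have hCrow : ∀ i ∈ T, C i j = clMean A (cluster c r) j := by
      intro i hi
      obtain ⟨i₀, hi₀, rfl⟩ := Finset.mem_map.mp hi
      have hri : c (e i₀) = r := by
        have h2 := hi₀
        simp only [hSdef, localCluster, Finset.mem_filter] at h2
        exact h2.2
      have := congrArg (fun v => v j) (hC (e i₀))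
      rw [← hri]
      exact this
    have hsumap : (∑ i ∈ S, (WithLp.equiv 2 (Fin d → ℝ)).symm ((A.submatrix ⇑e id) i)) j
        = ∑ i ∈ S, A (e i) j := by rw [WithLp.ofLp_sum]; exact Finset.sum_apply _ _ _
    have hsub : clMean (A.submatrix ⇑e id) S j = s⁻¹ * ∑ i ∈ T, A i j := by
      rw [hT, Finset.sum_map]
      show (s⁻¹ • ∑ i ∈ S, (WithLp.equiv 2 (Fin d → ℝ)).symm ((A.submatrix ⇑e id) i)) j
          = s⁻¹ * ∑ i ∈ S, A (e i) j
      rw [PiLp.smul_apply, hsumap, smul_eq_mul]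
    show Matrix.vecMul u (A - C) j
        = clMean (A.submatrix ⇑e id) S j - clMean A (cluster c r) j
    rw [lhs, hsub, Finset.sum_sub_distrib, mul_sub]
    congr 1
    rw [Finset.sum_congr rfl hCrow, Finset.sum_const, nsmul_eq_mul, hTcard]
    rw [← mul_assoc, inv_mul_cancel₀ (ne_of_gt hs0), one_mul]
  have hb := vecMul_norm_le' (A - C) u
  rw [key, hunorm] at hb
  have hb2 : ‖clMean (A.submatrix ⇑e id) S - clMean A (cluster c r)‖ ^ 2
      ≤ opNorm (A - C) ^ 2 * s⁻¹ := by
    calc ‖clMean (A.submatrix ⇑e id) S - clMean A (cluster c r)‖ ^ 2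
        ≤ (opNorm (A - C) * Real.sqrt s⁻¹) ^ 2 := pow_le_pow_left₀ (norm_nonneg _) hb 2
      _ = opNorm (A - C) ^ 2 * s⁻¹ := by
          rw [mul_pow, Real.sq_sqrt (by positivity)]
  calc s * ‖clMean (A.submatrix ⇑e id) S - clMean A (cluster c r)‖ ^ 2
      ≤ s * (opNorm (A - C) ^ 2 * s⁻¹) := mul_le_mul_of_nonneg_left hb2 (le_of_lt hs0)
    _ = opNorm (A - C) ^ 2 := by field_simp

theorem localMeans_opNorm_bound {n m d k k' : ℕ} (A C : Matrix (Fin n) (Fin d) ℝ)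
    (c : Fin n → Fin k) (e : Fin m ↪ Fin n)
    (Ct Cz : Matrix (Fin m) (Fin d) ℝ)
    (hC : ∀ i, (WithLp.equiv 2 (Fin d → ℝ)).symm (C i) = clMean A (cluster c (c i)))
    (hCt : ∀ i, (WithLp.equiv 2 (Fin d → ℝ)).symm (Ct i) = clMean A (cluster c (c (e i))))
    (hCz : ∀ i, (WithLp.equiv 2 (Fin d → ℝ)).symm (Cz i)
        = clMean (A.submatrix ⇑e id) (localCluster c e (c (e i))))
    (hk' : (Finset.univ.filter fun r => (localCluster c e r).Nonempty).card ≤ k') :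
    opNorm (Ct - Cz) ^ 2
        ≤ ∑ r : Fin k, ((localCluster c e r).card : ℝ) *
            ‖clMean (A.submatrix ⇑e id) (localCluster c e r) - clMean A (cluster c r)‖ ^ 2 ∧
      opNorm (Ct - Cz) ≤ Real.sqrt k' * opNorm (A - C) := by
  classical
  set Δ : Fin k → ℝ := fun r =>
    ‖clMean (A.submatrix ⇑e id) (localCluster c e r) - clMean A (cluster c r)‖ ^ 2 with hΔ
  -- rows of Ct - Cz
  have hrow : ∀ i : Fin m, ‖(WithLp.equiv 2 (Fin d → ℝ)).symm ((Ct - Cz) i)‖ ^ 2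
      = Δ (c (e i)) := by
    intro i
    have h1 : (WithLp.equiv 2 (Fin d → ℝ)).symm ((Ct - Cz) i)
        = clMean A (cluster c (c (e i)))
          - clMean (A.submatrix ⇑e id) (localCluster c e (c (e i))) := by
      have : (Ct - Cz) i = Ct i - Cz i := rfl
      rw [this, show ∀ a b : Fin d → ℝ, (WithLp.equiv 2 (Fin d → ℝ)).symm (a - b) = (WithLp.equiv 2 (Fin d → ℝ)).symm a - (WithLp.equiv 2 (Fin d → ℝ)).symm b from fun _ _ => rfl, hCt i, hCz i]
    rw [h1, hΔ, ← norm_neg]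
    simp [neg_sub]
  -- part 1
  have part1 : opNorm (Ct - Cz) ^ 2
      ≤ ∑ r : Fin k, ((localCluster c e r).card : ℝ) * Δ r := by
    calc opNorm (Ct - Cz) ^ 2
        ≤ ∑ i, ‖(WithLp.equiv 2 (Fin d → ℝ)).symm ((Ct - Cz) i)‖ ^ 2 :=
          opNorm_sq_le_sum_rows' _
      _ = ∑ i : Fin m, Δ (c (e i)) := Finset.sum_congr rfl fun i _ => hrow i
      _ = ∑ r : Fin k, ∑ i ∈ Finset.univ.filter (fun i => c (e i) = r), Δ (c (e i)) :=
          (Finset.sum_fiberwise _ _ _).symm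
      _ = ∑ r : Fin k, ((localCluster c e r).card : ℝ) * Δ r := by
          refine Finset.sum_congr rfl fun r _ => ?_
          rw [Finset.sum_congr rfl fun i hi => by
            rw [(Finset.mem_filter.mp hi).2]]
          rw [Finset.sum_const, nsmul_eq_mul]
          rfl
  refine ⟨part1, ?_⟩
  -- part 2
  have part2 : ∑ r : Fin k, ((localCluster c e r).card : ℝ) * Δ r
      ≤ (k' : ℝ) * opNorm (A - C) ^ 2 := by
    have hfe : ∑ r : Fin k, ((localCluster c e r).card : ℝ) * Δ r
        = ∑ r ∈ Finset.univ.filter (fun r => (localCluster c e r).Nonempty),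
            ((localCluster c e r).card : ℝ) * Δ r := by
      refine (Finset.sum_filter_of_ne fun r _ hne => ?_).symm
      by_contra hem
      rw [Finset.not_nonempty_iff_eq_empty] at hem
      simp [hem] at hne
    rw [hfe]
    calc ∑ r ∈ Finset.univ.filter (fun r => (localCluster c e r).Nonempty),
          ((localCluster c e r).card : ℝ) * Δ r
        ≤ ∑ r ∈ Finset.univ.filter (fun r => (localCluster c e r).Nonempty),
            opNorm (A - C) ^ 2 := by
          refine Finset.sum_le_sum fun r hr => ?_
          exact meanshift' A C c e hC r (Finset.mem_filter.mp hr).2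
      _ = ((Finset.univ.filter fun r => (localCluster c e r).Nonempty).card : ℝ)
            * opNorm (A - C) ^ 2 := by rw [Finset.sum_const, nsmul_eq_mul]
      _ ≤ (k' : ℝ) * opNorm (A - C) ^ 2 := by
          apply mul_le_mul_of_nonneg_right _ (sq_nonneg _)
          exact_mod_cast hk'
  have hfinal : opNorm (Ct - Cz) ^ 2 ≤ (k' : ℝ) * opNorm (A - C) ^ 2 := le_trans part1 part2
  calc opNorm (Ct - Cz) = Real.sqrt (opNorm (Ct - Cz) ^ 2) :=
        (Real.sqrt_sq (opNorm_nonneg' _)).symm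
    _ ≤ Real.sqrt ((k' : ℝ) * opNorm (A - C) ^ 2) := Real.sqrt_le_sqrt hfinal
    _ = Real.sqrt k' * opNorm (A - C) := by
        rw [Real.sqrt_mul (by positivity), Real.sqrt_sq (opNorm_nonneg' _)]
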